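/- Let T be a tree, u a leaf of T whose unique neighbor w has degree at least 4, and v a vertex of degree 2 in T with neighbors v₁ and v₂. Let T' be the tree obtained from T by deleting u and v and adding the edge v₁v₂. Then h₁(T') = h₁(T) − 1, h₂(T') = h₂(T) − 1, and the minimum size of an edge-separating-covering path system of T is at most one more than that of T'. -/

import Mathlib

open SimpleGraph
open scoped Classical

universe u

variable {V : Type u}

/-- A path in a graph `G`, recorded with its two endpoints. -/
def PathIn {V : Type u} (G : SimpleGraph V) : Type u :=
  Σ a b : V, {p : G.Walk a b // p.IsPath}

/-- The path `P` contains the vertex `x`. -/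
def PathIn.vmem {G : SimpleGraph V} (x : V) (P : PathIn G) : Prop :=
  x ∈ P.2.2.1.support

/-- The path `P` contains the edge `e`. -/
def PathIn.emem {G : SimpleGraph V} (e : Sym2 V) (P : PathIn G) : Prop :=
  e ∈ P.2.2.1.edges

/-- The path `P` contains the element `s` (a vertex or an edge). -/
def ElemMem (G : SimpleGraph V) (s : V ⊕ Sym2 V) (P : PathIn G) : Prop :=
  Sum.elim (fun x => PathIn.vmem x P) (fun e => PathIn.emem e P) s

/-- `F` separates the set `S` of elements (vertices and/or edges) of `G`. -/
def Separates (G : SimpleGraph V) (S : Set (V ⊕ Sym2 V)) (F : Set (PathIn G)) : Prop :=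
  ∀ s ∈ S, ∀ t ∈ S, s ≠ t → ∃ P ∈ F,
    (ElemMem G s P ∧ ¬ ElemMem G t P) ∨ (¬ ElemMem G s P ∧ ElemMem G t P)

/-- `F` covers the set `S` of elements of `G`. -/
def Covers (G : SimpleGraph V) (S : Set (V ⊕ Sym2 V)) (F : Set (PathIn G)) : Prop :=
  ∀ s ∈ S, ∃ P ∈ F, ElemMem G s P

/-- `F` separates the edges of `G`. -/
def EdgeSep (G : SimpleGraph V) (F : Set (PathIn G)) : Prop :=
  ∀ e ∈ G.edgeSet, ∀ f ∈ G.edgeSet, e ≠ f → ∃ P ∈ F,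
    (PathIn.emem e P ∧ ¬ PathIn.emem f P) ∨ (¬ PathIn.emem e P ∧ PathIn.emem f P)

/-- `F` covers the edges of `G`. -/
def EdgeCover (G : SimpleGraph V) (F : Set (PathIn G)) : Prop :=
  ∀ e ∈ G.edgeSet, ∃ P ∈ F, PathIn.emem e P

/-- `F` separates the vertices of `G`. -/
def VertexSep (G : SimpleGraph V) (F : Set (PathIn G)) : Prop :=
  ∀ x y : V, x ≠ y → ∃ P ∈ F,
    (PathIn.vmem x P ∧ ¬ PathIn.vmem y P) ∨ (¬ PathIn.vmem x P ∧ PathIn.vmem y P)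

/-- `F` covers the vertices of `G`. -/
def VertexCover (G : SimpleGraph V) (F : Set (PathIn G)) : Prop :=
  ∀ x : V, ∃ P ∈ F, PathIn.vmem x P

/-- The number of leaves of `G`. -/
noncomputable def leafCount (G : SimpleGraph V) [Fintype V] : ℕ :=
  Nat.card {x : V | G.degree x = 1}

/-- The number of degree-two vertices of `G`. -/
noncomputable def deg2Count (G : SimpleGraph V) [Fintype V] : ℕ :=
  Nat.card {x : V | G.degree x = 2}

/-- The set of interior edges: edges with neither endpoint a leaf. -/
noncomputable def interiorEdgeSet (G : SimpleGraph V) [Fintype V] : Set (Sym2 V) :=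
  {e : Sym2 V | e ∈ G.edgeSet ∧ ∀ x ∈ e, G.degree x ≠ 1}

/-- The tree obtained from `G` by deleting the leaf `u` and the degree-two
vertex `v`, and adding the edge `v₁v₂` between the former neighbors of `v`. -/
def reducedGraph (G : SimpleGraph V) (u v v₁ v₂ : V) :
    SimpleGraph {x : V // x ≠ u ∧ x ≠ v} :=
  SimpleGraph.fromRel (fun a b => G.Adj a.1 b.1 ∨ (a.1 = v₁ ∧ b.1 = v₂))

section Basics
variable [Fintype V] {G : SimpleGraph V} {u w v v₁ v₂ : V}

lemma nbr_u (hu : G.degree u = 1) (huw : G.Adj u w) : G.neighborFinset u = {w} := by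
  classical
  refine (Finset.eq_of_subset_of_card_le ?_ ?_).symm
  · simpa [SimpleGraph.mem_neighborFinset] using huw
  · simp [← SimpleGraph.card_neighborFinset_eq_degree] at hu
    simp [hu]

lemma adj_u_iff (hu : G.degree u = 1) (huw : G.Adj u w) {x : V} : G.Adj u x ↔ x = w := by
  classical
  rw [← SimpleGraph.mem_neighborFinset, nbr_u hu huw, Finset.mem_singleton]

lemma nbr_v (hv : G.degree v = 2) (hv1 : G.Adj v v₁) (hv2 : G.Adj v v₂) (h12 : v₁ ≠ v₂) :
    G.neighborFinset v = {v₁, v₂} := by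
  classical
  refine (Finset.eq_of_subset_of_card_le ?_ ?_).symm
  · intro x hx
    rcases Finset.mem_insert.1 hx with rfl | hx
    · simpa [SimpleGraph.mem_neighborFinset] using hv1
    · simp only [Finset.mem_singleton] at hx
      subst hx
      simpa [SimpleGraph.mem_neighborFinset] using hv2
  · simp only [← SimpleGraph.card_neighborFinset_eq_degree] at hv
    rw [hv, Finset.card_insert_of_notMem (by simp [h12]), Finset.card_singleton]

lemma adj_v_iff (hv : G.degree v = 2) (hv1 : G.Adj v v₁) (hv2 : G.Adj v v₂) (h12 : v₁ ≠ v₂)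
    {x : V} : G.Adj v x ↔ x = v₁ ∨ x = v₂ := by
  classical
  rw [← SimpleGraph.mem_neighborFinset, nbr_v hv hv1 hv2 h12]; simp

omit [Fintype V] in
lemma not_adj_v12 (hT : G.IsTree) (hv1 : G.Adj v v₁) (hv2 : G.Adj v v₂) (h12 : v₁ ≠ v₂) :
    ¬ G.Adj v₁ v₂ := by
  intro hadj
  have h1 : v ≠ v₁ := hv1.ne
  have h2 : v ≠ v₂ := hv2.ne
  have hp : (SimpleGraph.Walk.cons hadj SimpleGraph.Walk.nil : G.Walk v₁ v₂).IsPath := by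
    simp [SimpleGraph.Walk.cons_isPath_iff, hadj.ne]
  have hq : (SimpleGraph.Walk.cons hv1.symm (SimpleGraph.Walk.cons hv2 SimpleGraph.Walk.nil) :
      G.Walk v₁ v₂).IsPath := by
    simp [SimpleGraph.Walk.cons_isPath_iff, h1.symm, h12, h2]
  have := SimpleGraph.isAcyclic_iff_path_unique.1 hT.IsAcyclic ⟨_, hp⟩ ⟨_, hq⟩
  have hl := congrArg (fun q : G.Path v₁ v₂ => q.1.length) this
  simp [SimpleGraph.Walk.length_cons] at hl

omit [Fintype V] in
lemma adj'_iff (h12 : v₁ ≠ v₂) {a b : {x : V // x ≠ u ∧ x ≠ v}} :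
    (reducedGraph G u v v₁ v₂).Adj a b ↔
      G.Adj a.1 b.1 ∨ ((a.1 = v₁ ∧ b.1 = v₂) ∨ (a.1 = v₂ ∧ b.1 = v₁)) := by
  unfold reducedGraph
  rw [SimpleGraph.fromRel_adj]
  constructor
  · rintro ⟨hne, (h | h) | (h | h)⟩
    · exact Or.inl h
    · exact Or.inr (Or.inl h)
    · exact Or.inl h.symm
    · exact Or.inr (Or.inr ⟨h.2, h.1⟩)
  · rintro (h | ⟨h1, h2⟩ | ⟨h1, h2⟩)
    · exact ⟨fun he => G.irrefl (he ▸ h), Or.inl (Or.inl h)⟩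
    · exact ⟨fun he => h12 (h1 ▸ h2 ▸ congrArg Subtype.val he), Or.inl (Or.inr ⟨h1, h2⟩)⟩
    · exact ⟨fun he => h12 (h2 ▸ h1 ▸ (congrArg Subtype.val he).symm), Or.inr (Or.inr ⟨h2, h1⟩)⟩

end Basics
section Basics2
set_option linter.unusedSectionVars false
variable [Fintype V] {G : SimpleGraph V} {u w v v₁ v₂ : V}

lemma w_ne_v (hw : 4 ≤ G.degree w) (hv : G.degree v = 2) : w ≠ v := by
  intro h; rw [h, hv] at hw; omega

lemma u_ne_v (hu : G.degree u = 1) (hv : G.degree v = 2) : u ≠ v := by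
  intro h; rw [h, hv] at hu; omega

lemma v1_ne_u (hu : G.degree u = 1) (huw : G.Adj u w) (hw : 4 ≤ G.degree w)
    (hv : G.degree v = 2) (hv1 : G.Adj v v₁) : v₁ ≠ u := by
  intro h
  subst h
  have : G.Adj v₁ v := hv1.symm
  have hwv : v = w := (adj_u_iff hu huw).1 this
  exact w_ne_v hw hv hwv.symm

lemma edge_with_u (hu : G.degree u = 1) (huw : G.Adj u w) {e : Sym2 V}
    (he : e ∈ G.edgeSet) (hue : u ∈ e) : e = s(u, w) := by
  induction e with
  | _ x y =>
    rw [Sym2.mem_iff] at hue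
    rcases hue with rfl | rfl
    · have hy : y = w := (adj_u_iff hu huw).1 (G.mem_edgeSet.mp he)
      rw [hy]
    · have hy : x = w := (adj_u_iff hu huw).1 ((G.mem_edgeSet.mp he).symm)
      rw [hy, Sym2.eq_swap]

lemma edge_with_v (hv : G.degree v = 2) (hv1 : G.Adj v v₁) (hv2 : G.Adj v v₂) (h12 : v₁ ≠ v₂)
    {e : Sym2 V} (he : e ∈ G.edgeSet) (hue : v ∈ e) : e = s(v, v₁) ∨ e = s(v, v₂) := by
  induction e with
  | _ x y =>
    rw [Sym2.mem_iff] at hue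
    rcases hue with rfl | rfl
    · have hy := (adj_v_iff hv hv1 hv2 h12).1 (G.mem_edgeSet.mp he)
      rcases hy with h | h
      · exact Or.inl (by rw [h])
      · exact Or.inr (by rw [h])
    · have hy := (adj_v_iff hv hv1 hv2 h12).1 ((G.mem_edgeSet.mp he).symm)
      rcases hy with h | h
      · exact Or.inl (by rw [h, Sym2.eq_swap])
      · exact Or.inr (by rw [h, Sym2.eq_swap])

lemma degree_reduced (hT : G.IsTree) (hu : G.degree u = 1) (huw : G.Adj u w)
    (hw : 4 ≤ G.degree w) (hv : G.degree v = 2) (hv1 : G.Adj v v₁) (hv2 : G.Adj v v₂)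
    (h12 : v₁ ≠ v₂) {x : V} (hx : x ≠ u ∧ x ≠ v) :
    (reducedGraph G u v v₁ v₂).degree ⟨x, hx⟩ =
      if x = w then G.degree x - 1 else G.degree x := by
  classical
  have h2u : v₂ ≠ u := v1_ne_u hu huw hw hv hv2
  have h1u : v₁ ≠ u := v1_ne_u hu huw hw hv hv1
  have h1v : v₁ ≠ v := hv1.ne'
  have h2v : v₂ ≠ v := hv2.ne'
  have hna : ¬ G.Adj v₁ v₂ := not_adj_v12 hT hv1 hv2 h12
  set t : Finset V := (G.neighborFinset x \ {u, v}) ∪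
    (if x = v₁ then {v₂} else if x = v₂ then {v₁} else (∅ : Finset V)) with ht
  have hadj_u : G.Adj x u ↔ x = w := by
    constructor
    · intro h; exact (adj_u_iff hu huw).1 h.symm
    · rintro rfl; exact huw.symm
  have hadj_v : G.Adj x v ↔ (x = v₁ ∨ x = v₂) := by
    constructor
    · intro h; exact (adj_v_iff hv hv1 hv2 h12).1 h.symm
    · rintro (rfl | rfl); exacts [hv1.symm, hv2.symm]
  have hcard : (reducedGraph G u v v₁ v₂).degree ⟨x, hx⟩ = t.card := by
    rw [← SimpleGraph.card_neighborFinset_eq_degree]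
    refine Finset.card_bij (fun y _ => y.1) ?_ ?_ ?_
    · rintro ⟨y, hy1, hy2⟩ hmem
      rw [SimpleGraph.mem_neighborFinset, adj'_iff h12] at hmem
      rcases hmem with h | ⟨hx1, h⟩ | ⟨hx2, h⟩
      · exact Finset.mem_union_left _ (by simp [SimpleGraph.mem_neighborFinset, h, hy1, hy2])
      · refine Finset.mem_union_right _ ?_
        rw [if_pos hx1]
        simp only [Finset.mem_singleton]
        exact h
      · refine Finset.mem_union_right _ ?_
        rw [if_neg (fun hh => h12 (hh.symm.trans hx2)), if_pos hx2]
        simp only [Finset.mem_singleton]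
        exact h
    · rintro ⟨y, hy⟩ _ ⟨z, hz⟩ _ h
      exact Subtype.ext h
    · intro z hz
      rcases Finset.mem_union.1 hz with hz | hz
      · simp only [Finset.mem_sdiff, SimpleGraph.mem_neighborFinset, Finset.mem_insert,
          Finset.mem_singleton, not_or] at hz
        exact ⟨⟨z, hz.2.1, hz.2.2⟩, by
          rw [SimpleGraph.mem_neighborFinset, adj'_iff h12]; exact Or.inl hz.1, rfl⟩
      · by_cases hx1 : x = v₁
        · rw [if_pos hx1, Finset.mem_singleton] at hz
          exact ⟨⟨v₂, h2u, h2v⟩, by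
            rw [SimpleGraph.mem_neighborFinset, adj'_iff h12]
            exact Or.inr (Or.inl ⟨hx1, rfl⟩), hz.symm⟩
        · rw [if_neg hx1] at hz
          by_cases hx2 : x = v₂
          · rw [if_pos hx2, Finset.mem_singleton] at hz
            exact ⟨⟨v₁, h1u, h1v⟩, by
              rw [SimpleGraph.mem_neighborFinset, adj'_iff h12]
              exact Or.inr (Or.inr ⟨hx2, rfl⟩), hz.symm⟩
          · rw [if_neg hx2] at hz
            simp at hz
  rw [hcard]
  rw [← SimpleGraph.card_neighborFinset_eq_degree]
  by_cases hxw : x = w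
  · rw [if_pos hxw]
    have hux : u ∈ G.neighborFinset x := by
      rw [SimpleGraph.mem_neighborFinset, hadj_u]; exact hxw
    by_cases hx12 : x = v₁ ∨ x = v₂
    · -- u and v both neighbors
      have hvx : v ∈ G.neighborFinset x := by
        rw [SimpleGraph.mem_neighborFinset, hadj_v]; exact hx12
      have hsub : {u, v} ⊆ G.neighborFinset x := by
        intro z hz; rcases Finset.mem_insert.1 hz with rfl | hz
        · exact hux
        · rw [Finset.mem_singleton] at hz; subst hz; exact hvx
      have hcs : (G.neighborFinset x \ {u, v}).card = (G.neighborFinset x).card - 2 := by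
        rw [Finset.card_sdiff_of_subset hsub, Finset.card_insert_of_notMem (by
          simp [u_ne_v hu hv]), Finset.card_singleton]
      have hd4 : 4 ≤ (G.neighborFinset x).card := by
        rw [SimpleGraph.card_neighborFinset_eq_degree, hxw]; exact hw
      rcases hx12 with hx1 | hx2
      · have hother : v₂ ∉ G.neighborFinset x \ {u, v} := by
          simp only [Finset.mem_sdiff, SimpleGraph.mem_neighborFinset, not_and]
          intro hadj
          exact absurd (hx1 ▸ hadj) hna
        rw [ht, if_pos hx1, Finset.card_union_of_disjoint (by
          simp only [Finset.disjoint_singleton_right]; exact hother), hcs,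
          Finset.card_singleton]
        omega
      · have hx1 : x ≠ v₁ := fun h => h12 (h ▸ hx2 ▸ rfl)
        have hother : v₁ ∉ G.neighborFinset x \ {u, v} := by
          simp only [Finset.mem_sdiff, SimpleGraph.mem_neighborFinset, not_and]
          intro hadj
          exact absurd (hx2 ▸ hadj).symm hna
        rw [ht, if_neg hx1, if_pos hx2, Finset.card_union_of_disjoint (by
          simp only [Finset.disjoint_singleton_right]; exact hother), hcs,
          Finset.card_singleton]
        omega
    · push_neg at hx12
      have hvx : v ∉ G.neighborFinset x := by
        rw [SimpleGraph.mem_neighborFinset, hadj_v]; push_neg; exact hx12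
      have : G.neighborFinset x \ {u, v} = G.neighborFinset x \ {u} := by
        ext z
        simp only [Finset.mem_sdiff, Finset.mem_insert, Finset.mem_singleton, not_or]
        constructor
        · rintro ⟨h1, h2, h3⟩; exact ⟨h1, h2⟩
        · rintro ⟨h1, h2⟩; exact ⟨h1, h2, fun hzv => hvx (hzv ▸ h1)⟩
      rw [ht, if_neg hx12.1, if_neg hx12.2, Finset.union_empty, this,
        Finset.card_sdiff_of_subset (by simpa using hux), Finset.card_singleton]
  · rw [if_neg hxw]
    have hux : u ∉ G.neighborFinset x := by
      rw [SimpleGraph.mem_neighborFinset, hadj_u]; exact hxw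
    by_cases hx12 : x = v₁ ∨ x = v₂
    · have hvx : v ∈ G.neighborFinset x := by
        rw [SimpleGraph.mem_neighborFinset, hadj_v]; exact hx12
      have hsd : G.neighborFinset x \ {u, v} = G.neighborFinset x \ {v} := by
        ext z
        simp only [Finset.mem_sdiff, Finset.mem_insert, Finset.mem_singleton, not_or]
        constructor
        · rintro ⟨h1, h2, h3⟩; exact ⟨h1, h3⟩
        · rintro ⟨h1, h2⟩; exact ⟨h1, fun hzu => hux (hzu ▸ h1), h2⟩
      have hcs : (G.neighborFinset x \ {u, v}).card = (G.neighborFinset x).card - 1 := by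
        rw [hsd, Finset.card_sdiff_of_subset (by simpa using hvx), Finset.card_singleton]
      have hd1 : 1 ≤ (G.neighborFinset x).card :=
        Finset.card_pos.2 ⟨v, hvx⟩
      rcases hx12 with hx1 | hx2
      · have hother : v₂ ∉ G.neighborFinset x \ {u, v} := by
          simp only [Finset.mem_sdiff, SimpleGraph.mem_neighborFinset, not_and]
          intro hadj
          exact absurd (hx1 ▸ hadj) hna
        rw [ht, if_pos hx1, Finset.card_union_of_disjoint (by
          simp only [Finset.disjoint_singleton_right]; exact hother), hcs,
          Finset.card_singleton]
        omega
      · have hx1 : x ≠ v₁ := fun h => h12 (h ▸ hx2 ▸ rfl)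
        have hother : v₁ ∉ G.neighborFinset x \ {u, v} := by
          simp only [Finset.mem_sdiff, SimpleGraph.mem_neighborFinset, not_and]
          intro hadj
          exact absurd (hx2 ▸ hadj).symm hna
        rw [ht, if_neg hx1, if_pos hx2, Finset.card_union_of_disjoint (by
          simp only [Finset.disjoint_singleton_right]; exact hother), hcs,
          Finset.card_singleton]
        omega
    · push_neg at hx12
      have hvx : v ∉ G.neighborFinset x := by
        rw [SimpleGraph.mem_neighborFinset, hadj_v]; push_neg; exact hx12
      have : G.neighborFinset x \ {u, v} = G.neighborFinset x := by
        ext z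
        simp only [Finset.mem_sdiff, Finset.mem_insert, Finset.mem_singleton, not_or]
        constructor
        · rintro ⟨h1, _⟩; exact h1
        · intro h1
          exact ⟨h1, fun hzu => hux (hzu ▸ h1), fun hzv => hvx (hzv ▸ h1)⟩
      rw [ht, if_neg hx12.1, if_neg hx12.2, Finset.union_empty, this]

end Basics2
section Counting
set_option linter.unusedSectionVars false
variable [Fintype V] {G : SimpleGraph V} {u w v v₁ v₂ : V}

lemma leafCount_reduced (hT : G.IsTree) (hu : G.degree u = 1) (huw : G.Adj u w)
    (hw : 4 ≤ G.degree w) (hv : G.degree v = 2) (hv1 : G.Adj v v₁) (hv2 : G.Adj v v₂)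
    (h12 : v₁ ≠ v₂) :
    leafCount (reducedGraph G u v v₁ v₂) = leafCount G - 1 := by
  classical
  unfold leafCount
  have hset : {x' : {x : V // x ≠ u ∧ x ≠ v} | (reducedGraph G u v v₁ v₂).degree x' = 1} =
      {x' : {x : V // x ≠ u ∧ x ≠ v} | G.degree x'.1 = 1} := by
    ext ⟨x, hx⟩
    simp only [Set.mem_setOf_eq]
    rw [degree_reduced hT hu huw hw hv hv1 hv2 h12 hx]
    by_cases hxw : x = w
    · subst hxw
      rw [if_pos rfl]
      omega
    · rw [if_neg hxw]
  rw [hset]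
  have hstep2 : Nat.card {x' : {x : V // x ≠ u ∧ x ≠ v} | G.degree x'.1 = 1} =
      Nat.card ({x : V | G.degree x = 1} \ {u} : Set V) := by
    refine Nat.card_congr ⟨fun p => ⟨p.1.1, ?_⟩, fun p => ⟨⟨p.1, ?_, ?_⟩, ?_⟩, ?_, ?_⟩
    · exact ⟨p.2, by simpa using p.1.2.1⟩
    · simpa using p.2.2
    · intro hpv
      have := p.2.1
      simp only [Set.mem_setOf_eq] at this
      rw [hpv, hv] at this
      omega
    · exact p.2.1
    · rintro ⟨⟨x, hx⟩, h⟩; rfl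
    · rintro ⟨x, h⟩; rfl
  rw [hstep2, Nat.card_coe_set_eq, Nat.card_coe_set_eq,
    Set.ncard_diff_singleton_of_mem (by simpa using hu)]

lemma deg2Count_reduced (hT : G.IsTree) (hu : G.degree u = 1) (huw : G.Adj u w)
    (hw : 4 ≤ G.degree w) (hv : G.degree v = 2) (hv1 : G.Adj v v₁) (hv2 : G.Adj v v₂)
    (h12 : v₁ ≠ v₂) :
    deg2Count (reducedGraph G u v v₁ v₂) = deg2Count G - 1 := by
  classical
  unfold deg2Count
  have hset : {x' : {x : V // x ≠ u ∧ x ≠ v} | (reducedGraph G u v v₁ v₂).degree x' = 2} =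
      {x' : {x : V // x ≠ u ∧ x ≠ v} | G.degree x'.1 = 2} := by
    ext ⟨x, hx⟩
    simp only [Set.mem_setOf_eq]
    rw [degree_reduced hT hu huw hw hv hv1 hv2 h12 hx]
    by_cases hxw : x = w
    · subst hxw
      rw [if_pos rfl]
      omega
    · rw [if_neg hxw]
  rw [hset]
  have hstep2 : Nat.card {x' : {x : V // x ≠ u ∧ x ≠ v} | G.degree x'.1 = 2} =
      Nat.card ({x : V | G.degree x = 2} \ {v} : Set V) := by
    refine Nat.card_congr ⟨fun p => ⟨p.1.1, ?_⟩, fun p => ⟨⟨p.1, ?_, ?_⟩, ?_⟩, ?_, ?_⟩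
    · exact ⟨p.2, by simpa using p.1.2.2⟩
    · intro hpu
      have := p.2.1
      simp only [Set.mem_setOf_eq] at this
      rw [hpu, hu] at this
      omega
    · simpa using p.2.2
    · exact p.2.1
    · rintro ⟨⟨x, hx⟩, h⟩; rfl
    · rintro ⟨x, h⟩; rfl
  rw [hstep2, Nat.card_coe_set_eq, Nat.card_coe_set_eq,
    Set.ncard_diff_singleton_of_mem (by simpa using hv)]

end Counting
section Lift
set_option linter.unusedSectionVars false
variable {G : SimpleGraph V} {u w v v₁ v₂ : V}

lemma special_adj1 (hv1 : G.Adj v v₁) (hv2 : G.Adj v v₂) {a c : V}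
    (hsp : (a = v₁ ∧ c = v₂) ∨ (a = v₂ ∧ c = v₁)) : G.Adj a v ∧ G.Adj v c := by
  rcases hsp with ⟨rfl, rfl⟩ | ⟨rfl, rfl⟩
  exacts [⟨hv1.symm, hv2⟩, ⟨hv2.symm, hv1⟩]

lemma special_of_adj' (h12 : v₁ ≠ v₂) {a c : {x : V // x ≠ u ∧ x ≠ v}}
    (h : (reducedGraph G u v v₁ v₂).Adj a c) (hn : ¬ G.Adj a.1 c.1) :
    (a.1 = v₁ ∧ c.1 = v₂) ∨ (a.1 = v₂ ∧ c.1 = v₁) := by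
  rcases (adj'_iff h12).1 h with h' | h'
  · exact absurd h' hn
  · exact h'

variable (hv1 : G.Adj v v₁) (hv2 : G.Adj v v₂) (h12 : v₁ ≠ v₂)

noncomputable def liftWalk {a b : {x : V // x ≠ u ∧ x ≠ v}} :
    (reducedGraph G u v v₁ v₂).Walk a b → G.Walk a.1 b.1
  | SimpleGraph.Walk.nil => SimpleGraph.Walk.nil
  | @SimpleGraph.Walk.cons _ _ _ c _ h p =>
      if hadj : G.Adj a.1 c.1 then
        SimpleGraph.Walk.cons hadj (liftWalk p)
      else
        SimpleGraph.Walk.cons (special_adj1 hv1 hv2 (special_of_adj' h12 h hadj)).1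
          (SimpleGraph.Walk.cons (special_adj1 hv1 hv2 (special_of_adj' h12 h hadj)).2
            (liftWalk p))

@[simp] lemma liftWalk_nil {a : {x : V // x ≠ u ∧ x ≠ v}} :
    liftWalk hv1 hv2 h12 (SimpleGraph.Walk.nil : (reducedGraph G u v v₁ v₂).Walk a a) =
      SimpleGraph.Walk.nil := rfl

lemma liftWalk_cons_adj {a c b : {x : V // x ≠ u ∧ x ≠ v}}
    (h : (reducedGraph G u v v₁ v₂).Adj a c) (p : (reducedGraph G u v v₁ v₂).Walk c b)
    (hadj : G.Adj a.1 c.1) :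
    liftWalk hv1 hv2 h12 (SimpleGraph.Walk.cons h p) =
      SimpleGraph.Walk.cons hadj (liftWalk hv1 hv2 h12 p) := by
  simp only [liftWalk]
  rw [dif_pos hadj]

lemma liftWalk_cons_spec {a c b : {x : V // x ≠ u ∧ x ≠ v}}
    (h : (reducedGraph G u v v₁ v₂).Adj a c) (p : (reducedGraph G u v v₁ v₂).Walk c b)
    (hadj : ¬ G.Adj a.1 c.1) :
    liftWalk hv1 hv2 h12 (SimpleGraph.Walk.cons h p) =
      SimpleGraph.Walk.cons (special_adj1 hv1 hv2 (special_of_adj' h12 h hadj)).1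
        (SimpleGraph.Walk.cons (special_adj1 hv1 hv2 (special_of_adj' h12 h hadj)).2
          (liftWalk hv1 hv2 h12 p)) := by
  simp only [liftWalk]
  rw [dif_neg hadj]

end Lift
section Lift2
set_option linter.unusedSectionVars false
variable {G : SimpleGraph V} {u w v v₁ v₂ : V}
variable (hv1 : G.Adj v v₁) (hv2 : G.Adj v v₂) (h12 : v₁ ≠ v₂)

lemma lift_edges (hna : ¬ G.Adj v₁ v₂) (V1 V2 : {x : V // x ≠ u ∧ x ≠ v})
    (hV1 : V1.1 = v₁) (hV2 : V2.1 = v₂) {a b : {x : V // x ≠ u ∧ x ≠ v}} (p : (reducedGraph G u v v₁ v₂).Walk a b)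
    (e : Sym2 V) :
    e ∈ (liftWalk hv1 hv2 h12 p).edges ↔
      ((∃ e' ∈ p.edges, e' ≠ s(V1, V2) ∧ Sym2.map Subtype.val e' = e) ∨
       (s(V1, V2) ∈ p.edges ∧ (e = s(v, v₁) ∨ e = s(v, v₂)))) := by
  induction p with
  | nil => simp [liftWalk]
  | @cons a c b h p ih =>
    by_cases hadj : G.Adj a.1 c.1
    · rw [liftWalk_cons_adj hv1 hv2 h12 h p hadj]
      have hne : s(a, c) ≠ s(V1, V2) := by
        intro hx
        rcases Sym2.eq_iff.1 hx with ⟨ha, hc⟩ | ⟨ha, hc⟩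
        · rw [ha, hc, hV1, hV2] at hadj; exact hna hadj
        · rw [ha, hc, hV1, hV2] at hadj; exact hna hadj.symm
      rw [SimpleGraph.Walk.edges_cons, SimpleGraph.Walk.edges_cons]
      constructor
      · intro hmem
        rcases List.mem_cons.1 hmem with rfl | h'
        · exact Or.inl ⟨s(a, c), List.mem_cons_self, hne, Sym2.map_pair_eq _ _ _⟩
        · rcases (ih).1 h' with ⟨e', he', hne', hmap⟩ | ⟨hsp, he⟩
          · exact Or.inl ⟨e', List.mem_cons_of_mem _ he', hne', hmap⟩
          · exact Or.inr ⟨List.mem_cons_of_mem _ hsp, he⟩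
      · rintro (⟨e', he', hne', rfl⟩ | ⟨hsp, he⟩)
        · rcases List.mem_cons.1 he' with rfl | he'
          · exact List.mem_cons_self
          · exact List.mem_cons_of_mem _ ((ih).2 (Or.inl ⟨e', he', hne', rfl⟩))
        · rcases List.mem_cons.1 hsp with hx | hsp
          · exact absurd hx.symm hne
          · exact List.mem_cons_of_mem _ ((ih).2 (Or.inr ⟨hsp, he⟩))
    · rw [liftWalk_cons_spec hv1 hv2 h12 h p hadj]
      have hsp := special_of_adj' h12 h hadj
      have hspe : s(a, c) = s(V1, V2) := by
        rcases hsp with ⟨ha, hc⟩ | ⟨ha, hc⟩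
        · exact Sym2.eq_iff.2 (Or.inl ⟨Subtype.ext (ha.trans hV1.symm),
            Subtype.ext (hc.trans hV2.symm)⟩)
        · exact Sym2.eq_iff.2 (Or.inr ⟨Subtype.ext (ha.trans hV2.symm),
            Subtype.ext (hc.trans hV1.symm)⟩)
      have hfst : s(a.1, v) = s(v, v₁) ∨ s(a.1, v) = s(v, v₂) := by
        rcases hsp with ⟨ha, _⟩ | ⟨ha, _⟩
        · exact Or.inl (by rw [ha, Sym2.eq_swap])
        · exact Or.inr (by rw [ha, Sym2.eq_swap])
      have hsnd : s(v, c.1) = s(v, v₁) ∨ s(v, c.1) = s(v, v₂) := by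
        rcases hsp with ⟨_, hc⟩ | ⟨_, hc⟩
        · exact Or.inr (by rw [hc])
        · exact Or.inl (by rw [hc])
      rw [SimpleGraph.Walk.edges_cons, SimpleGraph.Walk.edges_cons,
        SimpleGraph.Walk.edges_cons]
      constructor
      · intro hmem
        rcases List.mem_cons.1 hmem with rfl | hmem
        · exact Or.inr ⟨List.mem_cons.2 (Or.inl hspe.symm), hfst⟩
        · rcases List.mem_cons.1 hmem with rfl | hmem
          · exact Or.inr ⟨List.mem_cons.2 (Or.inl hspe.symm), hsnd⟩
          · rcases (ih).1 hmem with ⟨e', he', hne', hmap⟩ | ⟨hsp', he⟩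
            · exact Or.inl ⟨e', List.mem_cons_of_mem _ he', hne', hmap⟩
            · exact Or.inr ⟨List.mem_cons_of_mem _ hsp', he⟩
      · rintro (⟨e', he', hne', rfl⟩ | ⟨_, he⟩)
        · rcases List.mem_cons.1 he' with rfl | he'
          · exact absurd hspe hne'
          · exact List.mem_cons_of_mem _ (List.mem_cons_of_mem _
              ((ih).2 (Or.inl ⟨e', he', hne', rfl⟩)))
        · rcases he with rfl | rfl
          · rcases hsp with ⟨ha, hc⟩ | ⟨ha, hc⟩
            · refine List.mem_cons.2 (Or.inl ?_)
              rw [ha, Sym2.eq_swap]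
            · refine List.mem_cons_of_mem _ (List.mem_cons.2 (Or.inl ?_))
              rw [hc]
          · rcases hsp with ⟨ha, hc⟩ | ⟨ha, hc⟩
            · refine List.mem_cons_of_mem _ (List.mem_cons.2 (Or.inl ?_))
              rw [hc]
            · refine List.mem_cons.2 (Or.inl ?_)
              rw [ha, Sym2.eq_swap]

lemma lift_support (hna : ¬ G.Adj v₁ v₂) (V1 V2 : {x : V // x ≠ u ∧ x ≠ v})
    (hV1 : V1.1 = v₁) (hV2 : V2.1 = v₂) {a b : {x : V // x ≠ u ∧ x ≠ v}} (p : (reducedGraph G u v v₁ v₂).Walk a b)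
    (x : V) :
    x ∈ (liftWalk hv1 hv2 h12 p).support ↔
      ((∃ x' ∈ p.support, x'.1 = x) ∨ (x = v ∧ s(V1, V2) ∈ p.edges)) := by
  induction p with
  | nil => simp [liftWalk, eq_comm]
  | @cons a c b h p ih =>
    by_cases hadj : G.Adj a.1 c.1
    · rw [liftWalk_cons_adj hv1 hv2 h12 h p hadj]
      have hne : s(a, c) ≠ s(V1, V2) := by
        intro hx
        rcases Sym2.eq_iff.1 hx with ⟨ha, hc⟩ | ⟨ha, hc⟩
        · rw [ha, hc, hV1, hV2] at hadj; exact hna hadj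
        · rw [ha, hc, hV1, hV2] at hadj; exact hna hadj.symm
      rw [SimpleGraph.Walk.support_cons, SimpleGraph.Walk.support_cons,
        SimpleGraph.Walk.edges_cons]
      simp only [List.mem_cons, ih]
      constructor
      · rintro (rfl | (⟨x', hx', rfl⟩ | ⟨rfl, hsp⟩))
        · exact Or.inl ⟨a, Or.inl rfl, rfl⟩
        · exact Or.inl ⟨x', Or.inr hx', rfl⟩
        · exact Or.inr ⟨rfl, Or.inr hsp⟩
      · rintro (⟨x', (rfl | hx'), rfl⟩ | ⟨rfl, (hx | hsp)⟩)
        · exact Or.inl rfl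
        · exact Or.inr (Or.inl ⟨x', hx', rfl⟩)
        · exact absurd hx.symm hne
        · exact Or.inr (Or.inr ⟨rfl, hsp⟩)
    · rw [liftWalk_cons_spec hv1 hv2 h12 h p hadj]
      have hsp := special_of_adj' h12 h hadj
      have hspe : s(a, c) = s(V1, V2) := by
        rcases hsp with ⟨ha, hc⟩ | ⟨ha, hc⟩
        · exact Sym2.eq_iff.2 (Or.inl ⟨Subtype.ext (ha.trans hV1.symm),
            Subtype.ext (hc.trans hV2.symm)⟩)
        · exact Sym2.eq_iff.2 (Or.inr ⟨Subtype.ext (ha.trans hV2.symm),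
            Subtype.ext (hc.trans hV1.symm)⟩)
      rw [SimpleGraph.Walk.support_cons, SimpleGraph.Walk.support_cons,
        SimpleGraph.Walk.support_cons, SimpleGraph.Walk.edges_cons]
      simp only [List.mem_cons, ih]
      constructor
      · rintro (rfl | (rfl | (⟨x', hx', rfl⟩ | ⟨rfl, hsp'⟩)))
        · exact Or.inl ⟨a, Or.inl rfl, rfl⟩
        · exact Or.inr ⟨rfl, Or.inl hspe.symm⟩
        · exact Or.inl ⟨x', Or.inr hx', rfl⟩
        · exact Or.inr ⟨rfl, Or.inr hsp'⟩
      · rintro (⟨x', (rfl | hx'), rfl⟩ | ⟨rfl, _⟩)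
        · exact Or.inl rfl
        · exact Or.inr (Or.inr (Or.inl ⟨x', hx', rfl⟩))
        · exact Or.inr (Or.inl rfl)

lemma lift_isPath (hna : ¬ G.Adj v₁ v₂) (V1 V2 : {x : V // x ≠ u ∧ x ≠ v})
    (hV1 : V1.1 = v₁) (hV2 : V2.1 = v₂) {a b : {x : V // x ≠ u ∧ x ≠ v}} (p : (reducedGraph G u v v₁ v₂).Walk a b)
    (hp : p.IsPath) : (liftWalk hv1 hv2 h12 p).IsPath := by
  induction p with
  | nil => simp [liftWalk]
  | @cons a c b h p ih =>
    rw [SimpleGraph.Walk.cons_isPath_iff] at hp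
    by_cases hadj : G.Adj a.1 c.1
    · rw [liftWalk_cons_adj hv1 hv2 h12 h p hadj]
      rw [SimpleGraph.Walk.cons_isPath_iff]
      refine ⟨ih hp.1, ?_⟩
      intro hmem
      rcases (lift_support hv1 hv2 h12 hna V1 V2 hV1 hV2 p a.1).1 hmem with
        ⟨x', hx', hxx⟩ | ⟨hav, _⟩
      · exact hp.2 (Subtype.ext hxx ▸ hx')
      · exact a.2.2 hav
    · rw [liftWalk_cons_spec hv1 hv2 h12 h p hadj]
      have hsp := special_of_adj' h12 h hadj
      rw [SimpleGraph.Walk.cons_isPath_iff, SimpleGraph.Walk.cons_isPath_iff]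
      have hvnot : v ∉ (liftWalk hv1 hv2 h12 p).support := by
        intro hmem
        rcases (lift_support hv1 hv2 h12 hna V1 V2 hV1 hV2 p v).1 hmem with
          ⟨x', _, hxx⟩ | ⟨_, hspmem⟩
        · exact x'.2.2 hxx
        · -- s(V1,V2) ∈ p.edges, so V1 and V2 ∈ p.support, but a ∈ {V1,V2} and a ∉ p.support
          rcases hsp with ⟨ha, _⟩ | ⟨ha, _⟩
          · exact hp.2 ((Subtype.ext (ha.trans hV1.symm) : a = V1) ▸
              SimpleGraph.Walk.fst_mem_support_of_mem_edges p hspmem)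
          · exact hp.2 ((Subtype.ext (ha.trans hV2.symm) : a = V2) ▸
              SimpleGraph.Walk.snd_mem_support_of_mem_edges p hspmem)
      refine ⟨⟨ih hp.1, hvnot⟩, ?_⟩
      rw [SimpleGraph.Walk.support_cons]
      intro hmem
      rcases List.mem_cons.1 hmem with hav | hmem
      · exact a.2.2 hav
      · rcases (lift_support hv1 hv2 h12 hna V1 V2 hV1 hV2 p a.1).1 hmem with
          ⟨x', hx', hxx⟩ | ⟨hav, _⟩
        · exact hp.2 (Subtype.ext hxx ▸ hx')
        · exact a.2.2 hav

end Lift2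
theorem stmt19 [Fintype V] (G : SimpleGraph V) (hT : G.IsTree)
    (u w v v₁ v₂ : V)
    (hu : G.degree u = 1) (huw : G.Adj u w) (hw : 4 ≤ G.degree w)
    (hv : G.degree v = 2) (hv1 : G.Adj v v₁) (hv2 : G.Adj v v₂) (h12 : v₁ ≠ v₂) :
    leafCount (reducedGraph G u v v₁ v₂) = leafCount G - 1 ∧
    deg2Count (reducedGraph G u v v₁ v₂) = deg2Count G - 1 ∧
    ∀ F' : Set (PathIn (reducedGraph G u v v₁ v₂)), F'.Finite →
      EdgeSep (reducedGraph G u v v₁ v₂) F' →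
      EdgeCover (reducedGraph G u v v₁ v₂) F' →
      ∃ F : Set (PathIn G), F.Finite ∧ EdgeSep G F ∧ EdgeCover G F ∧
        F.ncard ≤ F'.ncard + 1 := by
  classical
  have hna : ¬ G.Adj v₁ v₂ := not_adj_v12 hT hv1 hv2 h12
  have h1u : v₁ ≠ u := v1_ne_u hu huw hw hv hv1
  have h2u : v₂ ≠ u := v1_ne_u hu huw hw hv hv2
  have h1v : v₁ ≠ v := hv1.ne'
  have h2v : v₂ ≠ v := hv2.ne'
  have huv : u ≠ v := u_ne_v hu hv
  refine ⟨leafCount_reduced hT hu huw hw hv hv1 hv2 h12,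
    deg2Count_reduced hT hu huw hw hv hv1 hv2 h12, ?_⟩
  intro F' hF' hsep' hcov'
  set V1 : {x : V // x ≠ u ∧ x ≠ v} := ⟨v₁, h1u, h1v⟩ with hV1def
  set V2 : {x : V // x ≠ u ∧ x ≠ v} := ⟨v₂, h2u, h2v⟩ with hV2def
  -- the lifting map
  let L : PathIn (reducedGraph G u v v₁ v₂) → PathIn G := fun P =>
    ⟨P.1.1, P.2.1.1, ⟨liftWalk hv1 hv2 h12 P.2.2.1,
      lift_isPath hv1 hv2 h12 hna V1 V2 rfl rfl P.2.2.1 P.2.2.2⟩⟩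
  have hememL : ∀ (P' : PathIn (reducedGraph G u v v₁ v₂)) (e : Sym2 V),
      PathIn.emem e (L P') ↔ e ∈ (liftWalk hv1 hv2 h12 P'.2.2.1).edges := fun _ _ => Iff.rfl
  -- basic membership transfer facts
  have hnotu : ∀ (e' : Sym2 {x : V // x ≠ u ∧ x ≠ v}), u ∉ Sym2.map Subtype.val e' := by
    intro e' hmem
    rcases Sym2.mem_map.1 hmem with ⟨x', _, hx⟩
    exact x'.2.1 hx
  have hnotv : ∀ (e' : Sym2 {x : V // x ≠ u ∧ x ≠ v}), v ∉ Sym2.map Subtype.val e' := by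
    intro e' hmem
    rcases Sym2.mem_map.1 hmem with ⟨x', _, hx⟩
    exact x'.2.2 hx
  have hLuw : ∀ P' : PathIn (reducedGraph G u v v₁ v₂), ¬ PathIn.emem s(u, w) (L P') := by
    intro P' hmem
    rw [hememL, lift_edges hv1 hv2 h12 hna V1 V2 rfl rfl] at hmem
    rcases hmem with ⟨e', _, _, hmap⟩ | ⟨_, he | he⟩
    · exact hnotu e' (hmap ▸ Sym2.mem_mk_left u w)
    · rcases Sym2.eq_iff.1 he with ⟨h1, _⟩ | ⟨h1, _⟩
      · exact huv h1
      · exact h1u h1.symm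
    · rcases Sym2.eq_iff.1 he with ⟨h1, _⟩ | ⟨h1, _⟩
      · exact huv h1
      · exact h2u h1.symm
  have hLv1 : ∀ P' : PathIn (reducedGraph G u v v₁ v₂),
      PathIn.emem s(v, v₁) (L P') ↔ PathIn.emem s(V1, V2) P' := by
    intro P'
    rw [hememL, lift_edges hv1 hv2 h12 hna V1 V2 rfl rfl]
    constructor
    · rintro (⟨e', _, _, hmap⟩ | ⟨hsp, _⟩)
      · exact absurd (hmap ▸ Sym2.mem_mk_left v v₁) (hnotv e')
      · exact hsp
    · intro hsp
      exact Or.inr ⟨hsp, Or.inl rfl⟩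
  have hLv2 : ∀ P' : PathIn (reducedGraph G u v v₁ v₂),
      PathIn.emem s(v, v₂) (L P') ↔ PathIn.emem s(V1, V2) P' := by
    intro P'
    rw [hememL, lift_edges hv1 hv2 h12 hna V1 V2 rfl rfl]
    constructor
    · rintro (⟨e', _, _, hmap⟩ | ⟨hsp, _⟩)
      · exact absurd (hmap ▸ Sym2.mem_mk_left v v₂) (hnotv e')
      · exact hsp
    · intro hsp
      exact Or.inr ⟨hsp, Or.inr rfl⟩
  have hLmap : ∀ (P' : PathIn (reducedGraph G u v v₁ v₂)) (e' : Sym2 {x : V // x ≠ u ∧ x ≠ v}),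
      e' ≠ s(V1, V2) →
      (PathIn.emem (Sym2.map Subtype.val e') (L P') ↔ PathIn.emem e' P') := by
    intro P' e' hne
    rw [hememL, lift_edges hv1 hv2 h12 hna V1 V2 rfl rfl]
    constructor
    · rintro (⟨f', hf', hfne, hmap⟩ | ⟨_, he | he⟩)
      · rwa [Sym2.map.injective Subtype.val_injective hmap] at hf'
      · exact absurd (he ▸ Sym2.mem_mk_left v v₁) (hnotv e')
      · exact absurd (he ▸ Sym2.mem_mk_left v v₂) (hnotv e')
    · intro hmem
      exact Or.inl ⟨e', hmem, hne, rfl⟩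
  -- classification of edges of G avoiding u and v
  have hclass : ∀ e ∈ G.edgeSet, u ∉ e → v ∉ e →
      ∃ e' ∈ (reducedGraph G u v v₁ v₂).edgeSet, Sym2.map Subtype.val e' = e ∧
        e' ≠ s(V1, V2) := by
    intro e
    induction e with
    | _ x y =>
      intro he hux hvx
      rw [Sym2.mem_iff] at hux hvx
      push_neg at hux hvx
      refine ⟨s(⟨x, hux.1.symm, hvx.1.symm⟩, ⟨y, hux.2.symm, hvx.2.symm⟩), ?_, ?_, ?_⟩
      · rw [SimpleGraph.mem_edgeSet, adj'_iff h12]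
        exact Or.inl (G.mem_edgeSet.1 he)
      · rw [Sym2.map_pair_eq]
      · intro hx
        have := congrArg (Sym2.map Subtype.val) hx
        rw [Sym2.map_pair_eq, Sym2.map_pair_eq] at this
        rw [this] at he
        exact hna (G.mem_edgeSet.1 he)
  have hSP : s(V1, V2) ∈ (reducedGraph G u v v₁ v₂).edgeSet := by
    rw [SimpleGraph.mem_edgeSet, adj'_iff h12]
    exact Or.inr (Or.inl ⟨rfl, rfl⟩)
  -- the special path Q
  obtain ⟨q, hq, -⟩ := hT.existsUnique_path u v
  set Q : PathIn G := ⟨u, v, q, hq⟩ with hQdef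
  have hQuw : PathIn.emem s(u, w) Q := by
    obtain ⟨x, hx, q', hq'⟩ := SimpleGraph.Walk.exists_eq_cons_of_ne huv q
    have hxw : x = w := (adj_u_iff hu huw).1 hx
    show s(u, w) ∈ q.edges
    rw [hq', SimpleGraph.Walk.edges_cons, ← hxw]
    exact List.mem_cons_self
  have hQv : (PathIn.emem s(v, v₁) Q ∧ ¬ PathIn.emem s(v, v₂) Q) ∨
      (PathIn.emem s(v, v₂) Q ∧ ¬ PathIn.emem s(v, v₁) Q) := by
    have hrev : q.reverse.IsPath := hq.reverse
    obtain ⟨y, hy, r', hr'⟩ := SimpleGraph.Walk.exists_eq_cons_of_ne huv.symm q.reverse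
    have hmemiff : ∀ z : V, (s(v, z) ∈ q.edges ↔ z = y) := by
      intro z
      have h1 : s(v, z) ∈ q.edges ↔ s(v, z) ∈ q.reverse.edges := by
        rw [SimpleGraph.Walk.edges_reverse, List.mem_reverse]
      rw [h1, hr', SimpleGraph.Walk.edges_cons]
      rw [hr', SimpleGraph.Walk.cons_isPath_iff] at hrev
      constructor
      · intro hmem
        rcases List.mem_cons.1 hmem with hx | hx
        · exact Sym2.congr_right.1 hx
        · exact absurd (SimpleGraph.Walk.fst_mem_support_of_mem_edges r' hx) hrev.2
      · rintro rfl
        exact List.mem_cons_self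
    rcases (adj_v_iff hv hv1 hv2 h12).1 hy with h | h
    · left
      refine ⟨(hmemiff v₁).2 h.symm, fun hc => h12 ?_⟩
      rw [(hmemiff v₂).1 hc, ← h]
    · right
      refine ⟨(hmemiff v₂).2 h.symm, fun hc => h12 ?_⟩
      rw [(hmemiff v₁).1 hc, ← h]
  -- the family F
  refine ⟨insert Q (L '' F'), (hF'.image L).insert Q, ?_, ?_, ?_⟩
  · -- EdgeSep
    -- helper: for any edge f ≠ s(u,w), there is a lift containing f but not s(u,w)
    have hsepuw : ∀ f ∈ G.edgeSet, f ≠ s(u, w) →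
        ∃ P ∈ insert Q (L '' F'), PathIn.emem f P ∧ ¬ PathIn.emem s(u, w) P := by
      intro f hf hfne
      have hunotf : u ∉ f := by
        intro hunf
        exact hfne (edge_with_u hu huw hf hunf)
      by_cases hvf : v ∈ f
      · obtain ⟨P', hP', hmem⟩ := hcov' _ hSP
        rcases edge_with_v hv hv1 hv2 h12 hf hvf with rfl | rfl
        · exact ⟨L P', Set.mem_insert_of_mem _ ⟨P', hP', rfl⟩, (hLv1 P').2 hmem, hLuw P'⟩
        · exact ⟨L P', Set.mem_insert_of_mem _ ⟨P', hP', rfl⟩, (hLv2 P').2 hmem, hLuw P'⟩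
      · obtain ⟨f', hf', hmap, hfne'⟩ := hclass f hf hunotf hvf
        obtain ⟨P', hP', hmem⟩ := hcov' _ hf'
        exact ⟨L P', Set.mem_insert_of_mem _ ⟨P', hP', rfl⟩,
          hmap ▸ (hLmap P' f' hfne').2 hmem, hLuw P'⟩
    -- helper: separating s(v,vᵢ) from an edge avoiding u and v
    have hsepv : ∀ (e f : Sym2 V), (e = s(v, v₁) ∨ e = s(v, v₂)) → f ∈ G.edgeSet →
        u ∉ f → v ∉ f →
        ∃ P ∈ insert Q (L '' F'),
          (PathIn.emem e P ∧ ¬ PathIn.emem f P) ∨ (¬ PathIn.emem e P ∧ PathIn.emem f P) := by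
      intro e f hev hf huf hvf
      obtain ⟨f', hf', hmap, hfne'⟩ := hclass f hf huf hvf
      obtain ⟨P', hP', hxor⟩ := hsep' _ hSP _ hf' (fun hc => hfne' hc.symm)
      have hee : PathIn.emem e (L P') ↔ PathIn.emem s(V1, V2) P' := by
        rcases hev with rfl | rfl
        · exact hLv1 P'
        · exact hLv2 P'
      have hff : PathIn.emem f (L P') ↔ PathIn.emem f' P' := by
        rw [← hmap]; exact hLmap P' f' hfne'
      refine ⟨L P', Set.mem_insert_of_mem _ ⟨P', hP', rfl⟩, ?_⟩
      rcases hxor with ⟨h1, h2⟩ | ⟨h1, h2⟩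
      · exact Or.inl ⟨hee.2 h1, fun hc => h2 (hff.1 hc)⟩
      · exact Or.inr ⟨fun hc => h1 (hee.1 hc), hff.2 h2⟩
    intro e he f hf hef
    by_cases hue : u ∈ e
    · have heuw : e = s(u, w) := edge_with_u hu huw he hue
      obtain ⟨P, hP, h1, h2⟩ := hsepuw f hf (fun hc => hef (heuw ▸ hc.symm ▸ rfl))
      exact ⟨P, hP, Or.inr ⟨heuw ▸ h2, h1⟩⟩
    · by_cases huf : u ∈ f
      · have hfuw : f = s(u, w) := edge_with_u hu huw hf huf
        obtain ⟨P, hP, h1, h2⟩ := hsepuw e he (fun hc => hef (hfuw ▸ hc ▸ rfl))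
        exact ⟨P, hP, Or.inl ⟨h1, hfuw ▸ h2⟩⟩
      · by_cases hve : v ∈ e
        · by_cases hvf : v ∈ f
          · -- both incident to v
            rcases edge_with_v hv hv1 hv2 h12 he hve with rfl | rfl <;>
              rcases edge_with_v hv hv1 hv2 h12 hf hvf with rfl | rfl
            · exact absurd rfl hef
            · refine ⟨Q, Set.mem_insert _ _, ?_⟩
              rcases hQv with ⟨ha, hb⟩ | ⟨ha, hb⟩
              · exact Or.inl ⟨ha, hb⟩
              · exact Or.inr ⟨hb, ha⟩
            · refine ⟨Q, Set.mem_insert _ _, ?_⟩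
              rcases hQv with ⟨ha, hb⟩ | ⟨ha, hb⟩
              · exact Or.inr ⟨hb, ha⟩
              · exact Or.inl ⟨ha, hb⟩
            · exact absurd rfl hef
          · exact hsepv e f (edge_with_v hv hv1 hv2 h12 he hve) hf huf hvf
        · by_cases hvf : v ∈ f
          · obtain ⟨P, hP, h⟩ := hsepv f e (edge_with_v hv hv1 hv2 h12 hf hvf) he hue hve
            refine ⟨P, hP, ?_⟩
            rcases h with ⟨h1, h2⟩ | ⟨h1, h2⟩
            · exact Or.inr ⟨h2, h1⟩
            · exact Or.inl ⟨h2, h1⟩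
          · -- both avoid u and v
            obtain ⟨e', he', hmape, hene⟩ := hclass e he hue hve
            obtain ⟨f', hf', hmapf, hfne⟩ := hclass f hf huf hvf
            have hef' : e' ≠ f' := fun hc => hef (hmape ▸ hmapf ▸ hc ▸ rfl)
            obtain ⟨P', hP', hxor⟩ := hsep' _ he' _ hf' hef'
            have hee : PathIn.emem e (L P') ↔ PathIn.emem e' P' := by
              rw [← hmape]; exact hLmap P' e' hene
            have hff : PathIn.emem f (L P') ↔ PathIn.emem f' P' := by
              rw [← hmapf]; exact hLmap P' f' hfne
            refine ⟨L P', Set.mem_insert_of_mem _ ⟨P', hP', rfl⟩, ?_⟩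
            rcases hxor with ⟨h1, h2⟩ | ⟨h1, h2⟩
            · exact Or.inl ⟨hee.2 h1, fun hc => h2 (hff.1 hc)⟩
            · exact Or.inr ⟨fun hc => h1 (hee.1 hc), hff.2 h2⟩
  · -- EdgeCover
    intro e he
    by_cases hue : u ∈ e
    · exact ⟨Q, Set.mem_insert _ _, edge_with_u hu huw he hue ▸ hQuw⟩
    · by_cases hve : v ∈ e
      · obtain ⟨P', hP', hmem⟩ := hcov' _ hSP
        rcases edge_with_v hv hv1 hv2 h12 he hve with rfl | rfl
        · exact ⟨L P', Set.mem_insert_of_mem _ ⟨P', hP', rfl⟩, (hLv1 P').2 hmem⟩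
        · exact ⟨L P', Set.mem_insert_of_mem _ ⟨P', hP', rfl⟩, (hLv2 P').2 hmem⟩
      · obtain ⟨e', he', hmap, hene⟩ := hclass e he hue hve
        obtain ⟨P', hP', hmem⟩ := hcov' _ he'
        exact ⟨L P', Set.mem_insert_of_mem _ ⟨P', hP', rfl⟩,
          hmap ▸ (hLmap P' e' hene).2 hmem⟩
  · -- cardinality
    calc (insert Q (L '' F')).ncard ≤ (L '' F').ncard + 1 := Set.ncard_insert_le _ _
      _ ≤ F'.ncard + 1 := by
          exact Nat.add_le_add_right (Set.ncard_image_le hF') 1
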